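/- For any two rankings σ, τ of n elements, the Kendall-tau distance is at most the Spearman footrule distance: K(σ, τ) ≤ F(σ, τ). -/

import Mathlib

def footrule {n : ℕ} (σ τ : Equiv.Perm (Fin n)) : ℤ :=
  ∑ i, |((σ i : ℕ) : ℤ) - ((τ i : ℕ) : ℤ)|

def kendallTau {n : ℕ} (σ τ : Equiv.Perm (Fin n)) : ℕ :=
  (Finset.univ.filter (fun p : Fin n × Fin n =>
    p.1 < p.2 ∧ ((σ p.1 < σ p.2) ↔ (τ p.2 < τ p.1)))).card

open Finset Equiv

namespace DGaux

variable {n : ℕ}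

def InvSet (π : Equiv.Perm (Fin n)) : Finset (Fin n × Fin n) :=
  Finset.univ.filter (fun p => p.1 < p.2 ∧ π p.2 < π p.1)

lemma invset_one : (InvSet (1 : Equiv.Perm (Fin n))) = ∅ := by
  unfold InvSet
  rw [Finset.filter_eq_empty_iff]
  rintro p _ ⟨h1, h2⟩
  simp only [Equiv.Perm.one_apply] at h2
  exact absurd h2 (asymm h1)

lemma footrule_nonneg (σ τ : Equiv.Perm (Fin n)) : 0 ≤ footrule σ τ :=
  Finset.sum_nonneg fun i _ => abs_nonneg _

lemma inv_le_fr : ∀ (N : ℕ) (π : Equiv.Perm (Fin n)), π.support.card ≤ N →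
    ((InvSet π).card : ℤ) ≤ footrule π 1 := by
  intro N
  induction N with
  | zero =>
    intro π hc
    have : π = 1 := by
      rw [← Equiv.Perm.support_eq_empty_iff]
      exact Finset.card_eq_zero.mp (Nat.le_zero.mp hc)
    subst this
    rw [invset_one]
    simpa using footrule_nonneg (1 : Equiv.Perm (Fin n)) 1
  | succ N ih =>
    intro π hc
    by_cases hone : π = 1
    · subst hone
      rw [invset_one]
      simpa using footrule_nonneg (1 : Equiv.Perm (Fin n)) 1
    -- setup
    have hsupp : π.support.Nonempty := by
      rw [Finset.nonempty_iff_ne_empty]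
      intro h
      exact hone (Equiv.Perm.support_eq_empty_iff.mp h)
    obtain ⟨i, hidef⟩ : ∃ i, π.support.min' hsupp = i := ⟨_, rfl⟩
    have hi_mem : π i ≠ i := by
      have := π.support.min'_mem hsupp
      rw [hidef, Equiv.Perm.mem_support] at this
      exact this
    have hmin : ∀ k, π k ≠ k → i ≤ k := fun k hk =>
      hidef ▸ π.support.min'_le k (Equiv.Perm.mem_support.mpr hk)
    have hfix : ∀ k, k < i → π k = k := by
      intro k hk
      by_contra h
      exact absurd hk (not_lt.mpr (hmin k h))
    have hval : ∀ k, π k < i → π k = k := by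
      intro k hk
      have h2 := hfix (π k) hk
      exact π.injective h2
    obtain ⟨a, hadef⟩ : ∃ a, π i = a := ⟨_, rfl⟩
    obtain ⟨j, hjdef⟩ : ∃ j, π⁻¹ i = j := ⟨_, rfl⟩
    have hπj : π j = i := by rw [← hjdef]; exact π.apply_symm_apply i
    have hia : i < a := by
      rcases lt_trichotomy i a with h | h | h
      · exact h
      · exact absurd (h ▸ hadef) hi_mem
      · exact absurd (hval i (hadef ▸ h)) hi_mem
    have hij : i < j := by
      rcases lt_trichotomy i j with h | h | h
      · exact h
      · exact absurd (h ▸ hπj) hi_mem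
      · have := hfix j h
        rw [hπj] at this
        exact absurd this.symm (ne_of_lt h)
    obtain ⟨π', hπ'def⟩ : ∃ π', π * Equiv.swap i j = π' := ⟨_, rfl⟩
    have hπ'i : π' i = i := by
      rw [← hπ'def, Equiv.Perm.mul_apply, Equiv.swap_apply_left, hπj]
    have hπ'j : π' j = a := by
      rw [← hπ'def, Equiv.Perm.mul_apply, Equiv.swap_apply_right, hadef]
    have hπ'k : ∀ k, k ≠ i → k ≠ j → π' k = π k := by
      intro k h1 h2
      rw [← hπ'def, Equiv.Perm.mul_apply, Equiv.swap_apply_of_ne_of_ne h1 h2]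
    -- support decreases
    have hsub : π'.support ⊆ π.support.erase i := by
      intro k hk
      rw [Equiv.Perm.mem_support] at hk
      rw [Finset.mem_erase, Equiv.Perm.mem_support]
      rcases eq_or_ne k i with rfl | h1
      · exact absurd hπ'i hk
      rcases eq_or_ne k j with rfl | h2
      · exact ⟨h1, fun hh => hi_mem (by rw [← hπj, hh, hh])⟩
      · rw [hπ'k k h1 h2] at hk
        exact ⟨h1, hk⟩
    have hcard : π'.support.card ≤ N := by
      have h1 := Finset.card_le_card hsub
      have h2 : (π.support.erase i).card < π.support.card :=
        Finset.card_erase_lt_of_mem (hidef ▸ π.support.min'_mem hsupp)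
      omega
    have IH := ih π' hcard
    -- the M set
    set M : Finset (Fin n) := Finset.univ.filter (fun k => i < k ∧ k < j ∧ π k < a) with hMdef
    set m : ℕ := M.card with hmdef
    have hm1 : m ≤ (j : ℕ) - (i : ℕ) - 1 := by
      have := Finset.card_le_card_of_injOn (fun k : Fin n => (k : ℕ))
        (s := M) (t := Finset.Ioo (i : ℕ) (j : ℕ)) ?_ ?_
      · rwa [Nat.card_Ioo] at this
      · intro k hk
        rw [hMdef, Finset.mem_coe, Finset.mem_filter] at hk
        obtain ⟨_, h1, h2, _⟩ := hk
        exact Finset.mem_Ioo.mpr ⟨h1, h2⟩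
      · intro x _ y _ h
        exact Fin.val_injective h
    have hm2 : m ≤ (a : ℕ) - (i : ℕ) - 1 := by
      have := Finset.card_le_card_of_injOn (fun k : Fin n => ((π k : Fin n) : ℕ))
        (s := M) (t := Finset.Ioo (i : ℕ) (a : ℕ)) ?_ ?_
      · rwa [Nat.card_Ioo] at this
      · intro k hk
        rw [hMdef, Finset.mem_coe, Finset.mem_filter] at hk
        obtain ⟨_, h1, h2, h3⟩ := hk
        refine Finset.mem_Ioo.mpr ⟨?_, h3⟩
        have hne : π k ≠ i := fun hh => by
          have : k = j := π.injective (hh.trans hπj.symm)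
          exact absurd (this ▸ h2) (lt_irrefl j)
        rcases lt_trichotomy (π k) i with h | h | h
        · have := hval k h
          rw [this] at h
          exact absurd h1 (not_lt.mpr (le_of_lt h))
        · exact absurd h hne
        · exact h
      · intro x _ y _ h
        exact π.injective (Fin.val_injective h)
    -- the S set
    set S : Finset (Fin n × Fin n) :=
      {(i, j)} ∪ M.image (fun k => (i, k)) ∪ M.image (fun k => (k, j)) with hSdef
    have hScard : S.card ≤ 2 * m + 1 := by
      calc S.card ≤ ({(i, j)} ∪ M.image (fun k => (i, k)) : Finset _).card
            + (M.image (fun k => (k, j))).card := Finset.card_union_le _ _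
        _ ≤ ({((i : Fin n), j)} : Finset _).card + (M.image (fun k => (i, k))).card
            + (M.image (fun k => (k, j))).card := by
              have := Finset.card_union_le ({((i : Fin n), j)} : Finset _) (M.image (fun k => (i, k)))
              omega
        _ ≤ 1 + m + m := by
              have h1 := Finset.card_image_le (s := M) (f := fun k => ((i : Fin n), k))
              have h2 := Finset.card_image_le (s := M) (f := fun k => (k, (j : Fin n)))
              simp only [Finset.card_singleton]
              omega
        _ ≤ 2 * m + 1 := by omega
    -- the injection
    have hmem : ∀ (ρ : Equiv.Perm (Fin n)) (p : Fin n × Fin n),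
        p ∈ InvSet ρ ↔ p.1 < p.2 ∧ ρ p.2 < ρ p.1 := by
      intro ρ p; simp [InvSet]
    have hval2 : ∀ k, π k < i → k < i := by
      intro k hk
      have := hval k hk
      rwa [this] at hk
    have hkey : (InvSet π).card ≤ (InvSet π').card + (2 * m + 1) := by
      have step : (InvSet π).card ≤ (InvSet π' ∪ S).card := by
        apply Finset.card_le_card_of_injOn
          (fun p : Fin n × Fin n => if p.1 = i ∧ j < p.2 then (j, p.2) else p)
        · -- maps into
          intro p hp
          rw [Finset.mem_coe, hmem] at hp; rw [Finset.mem_coe]; beta_reduce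
          obtain ⟨hp1, hp2⟩ := hp
          by_cases hc : p.1 = i ∧ j < p.2
          · rw [if_pos hc]
            apply Finset.mem_union_left
            rw [hmem]
            refine ⟨hc.2, ?_⟩
            have hne1 : p.2 ≠ i := ne_of_gt (lt_trans hij hc.2)
            have hne2 : p.2 ≠ j := ne_of_gt hc.2
            rw [hπ'k p.2 hne1 hne2, hπ'j]
            rw [hc.1, hadef] at hp2
            exact hp2
          · rw [if_neg hc]
            by_cases h1 : p.1 = i
            · have h2 : ¬ j < p.2 := fun hh => hc ⟨h1, hh⟩
              rcases eq_or_ne p.2 j with h3 | h3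
              · apply Finset.mem_union_right
                rw [hSdef]
                apply Finset.mem_union_left
                apply Finset.mem_union_left
                rw [Finset.mem_singleton]
                exact Prod.ext h1 h3
              · have h4 : p.2 < j := lt_of_le_of_ne (not_lt.mp h2) h3
                have h5 : p.2 ∈ M := by
                  rw [hMdef, Finset.mem_filter]
                  refine ⟨Finset.mem_univ _, h1 ▸ hp1, h4, ?_⟩
                  rw [h1, hadef] at hp2
                  exact hp2
                apply Finset.mem_union_right
                rw [hSdef]
                apply Finset.mem_union_left
                apply Finset.mem_union_right
                rw [Finset.mem_image]
                exact ⟨p.2, h5, Prod.ext h1.symm rfl⟩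
            · have hip1 : i < p.1 := by
                rcases lt_trichotomy p.1 i with h | h | h
                · exfalso
                  have hf := hfix p.1 h
                  rw [hf] at hp2
                  have hlt : π p.2 < i := lt_trans hp2 h
                  have h7 : p.2 < p.1 := (hval p.2 hlt) ▸ hp2
                  exact absurd hp1 (not_lt.mpr (le_of_lt h7))
                · exact absurd h h1
                · exact h
              have hp1j : p.1 ≠ j := by
                intro hh
                rw [hh, hπj] at hp2
                have := hval2 p.2 hp2
                exact absurd (lt_trans (hh ▸ hp1 : j < p.2) (lt_trans this hij)) (lt_irrefl _)
              by_cases h2 : p.2 = j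
              · by_cases h3 : π p.1 < a
                · have h5 : p.1 ∈ M := by
                    rw [hMdef, Finset.mem_filter]
                    exact ⟨Finset.mem_univ _, hip1, h2 ▸ hp1, h3⟩
                  apply Finset.mem_union_right
                  rw [hSdef]
                  apply Finset.mem_union_right
                  rw [Finset.mem_image]
                  exact ⟨p.1, h5, Prod.ext rfl h2.symm⟩
                · apply Finset.mem_union_left
                  rw [hmem]
                  refine ⟨hp1, ?_⟩
                  rw [hπ'k p.1 h1 hp1j, h2, hπ'j]
                  have hne : a ≠ π p.1 := by
                    intro hh
                    exact h1 (π.injective (hadef.trans hh)).symm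
                  exact lt_of_le_of_ne (not_lt.mp h3) hne
              · have h4 : p.2 ≠ i := ne_of_gt (lt_trans hip1 hp1)
                apply Finset.mem_union_left
                rw [hmem]
                rw [hπ'k p.1 h1 hp1j, hπ'k p.2 h4 h2]
                exact ⟨hp1, hp2⟩
        · -- injective
          intro p hp q hq heq
          rw [Finset.mem_coe, hmem] at hp hq
          simp only at heq
          have hnoj : ∀ r : Fin n × Fin n, r.1 < r.2 ∧ π r.2 < π r.1 → r.1 = j → False := by
            rintro r ⟨hr1, hr2⟩ hrj
            rw [hrj, hπj] at hr2
            have := hval2 r.2 hr2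
            exact absurd (lt_trans (hrj ▸ hr1 : j < r.2) (lt_trans this hij)) (lt_irrefl _)
          by_cases hcp : p.1 = i ∧ j < p.2 <;> by_cases hcq : q.1 = i ∧ j < q.2
          · rw [if_pos hcp, if_pos hcq] at heq
            have h2 : p.2 = q.2 := (Prod.mk.injEq _ _ _ _ ▸ heq).2
            exact Prod.ext (hcp.1.trans hcq.1.symm) h2
          · rw [if_pos hcp, if_neg hcq] at heq
            exfalso
            exact hnoj q hq (by rw [← heq])
          · rw [if_neg hcp, if_pos hcq] at heq
            exfalso
            exact hnoj p hp (by rw [heq])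
          · rw [if_neg hcp, if_neg hcq] at heq
            exact heq
      calc (InvSet π).card ≤ (InvSet π' ∪ S).card := step
        _ ≤ (InvSet π').card + S.card := Finset.card_union_le _ _
        _ ≤ (InvSet π').card + (2 * m + 1) := by omega
    -- footrule difference
    have hfd : footrule π 1 - footrule π' 1
        = |((a : ℕ) : ℤ) - ((i : ℕ) : ℤ)| + |((j : ℕ) : ℤ) - ((i : ℕ) : ℤ)|
          - |((a : ℕ) : ℤ) - ((j : ℕ) : ℤ)| := by
      have hform : ∀ ρ : Equiv.Perm (Fin n),
          footrule ρ 1 = ∑ k, |((ρ k : ℕ) : ℤ) - ((k : ℕ) : ℤ)| := by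
        intro ρ; simp [footrule]
      rw [hform, hform, ← Finset.sum_sub_distrib]
      have hvan : ∀ k ∈ Finset.univ, k ∉ ({i, j} : Finset (Fin n)) →
          (|((π k : ℕ) : ℤ) - ((k : ℕ) : ℤ)| - |((π' k : ℕ) : ℤ) - ((k : ℕ) : ℤ)|) = 0 := by
        intro k _ hk
        simp only [Finset.mem_insert, Finset.mem_singleton, not_or] at hk
        rw [hπ'k k hk.1 hk.2]
        ring
      rw [← Finset.sum_subset (Finset.subset_univ ({i, j} : Finset (Fin n))) hvan]
      rw [Finset.sum_pair (ne_of_lt hij)]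
      rw [hadef, hπj, hπ'i, hπ'j]
      have : |((i : ℕ) : ℤ) - ((j : ℕ) : ℤ)| = |((j : ℕ) : ℤ) - ((i : ℕ) : ℤ)| := abs_sub_comm _ _
      rw [this]
      ring_nf
      simp [abs_sub_comm]
    -- final arithmetic
    have hia' : (i : ℕ) < (a : ℕ) := hia
    have hij' : (i : ℕ) < (j : ℕ) := hij
    have harith : (2 * m + 1 : ℤ) ≤ footrule π 1 - footrule π' 1 := by
      rw [hfd]
      rcases abs_cases (((a : ℕ) : ℤ) - ((j : ℕ) : ℤ)) with ⟨h, _⟩ | ⟨h, _⟩ <;>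
        rcases abs_cases (((a : ℕ) : ℤ) - ((i : ℕ) : ℤ)) with ⟨h2, _⟩ | ⟨h2, _⟩ <;>
        rcases abs_cases (((j : ℕ) : ℤ) - ((i : ℕ) : ℤ)) with ⟨h3, _⟩ | ⟨h3, _⟩ <;>
        omega
    have hcast : ((InvSet π).card : ℤ) ≤ ((InvSet π').card : ℤ) + (2 * m + 1 : ℤ) := by
      exact_mod_cast hkey
    linarith

lemma kendall_one (π : Equiv.Perm (Fin n)) : kendallTau π 1 = (InvSet π).card := by
  unfold kendallTau InvSet
  congr 1
  apply Finset.filter_congr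
  intro p _
  simp only [Equiv.Perm.one_apply]
  constructor
  · rintro ⟨h1, h2⟩
    refine ⟨h1, ?_⟩
    have hne : π p.2 ≠ π p.1 := fun h => absurd (π.injective h) (ne_of_gt h1)
    rcases lt_or_gt_of_ne hne with h | h
    · exact h
    · exact absurd (h2.mp h) (asymm h1)
  · rintro ⟨h1, h2⟩
    exact ⟨h1, ⟨fun h => absurd h (asymm h2), fun h => absurd h (asymm h1)⟩⟩

lemma footrule_one (π : Equiv.Perm (Fin n)) :
    footrule π 1 = ∑ k, |((π k : ℕ) : ℤ) - ((k : ℕ) : ℤ)| := by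
  simp [footrule]

lemma footrule_red (σ τ : Equiv.Perm (Fin n)) : footrule σ τ = footrule (τ * σ⁻¹) 1 := by
  rw [footrule_one, footrule]
  rw [← Equiv.sum_comp σ (fun k => |(((τ * σ⁻¹) k : ℕ) : ℤ) - ((k : ℕ) : ℤ)|)]
  apply Finset.sum_congr rfl
  intro i _
  simp only [Equiv.Perm.mul_apply, Equiv.Perm.inv_def, Equiv.symm_apply_apply]
  rw [abs_sub_comm]

lemma kendall_red (σ τ : Equiv.Perm (Fin n)) :
    kendallTau σ τ = (InvSet (τ * σ⁻¹)).card := by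
  set π := τ * σ⁻¹ with hπ
  have hπσ : ∀ x, π (σ x) = τ x := fun x => by
    simp [hπ, Equiv.Perm.mul_apply]
  unfold kendallTau InvSet
  apply Finset.card_bij'
    (i := fun p _ => if σ p.1 < σ p.2 then (σ p.1, σ p.2) else (σ p.2, σ p.1))
    (j := fun q _ => if σ⁻¹ q.1 < σ⁻¹ q.2 then (σ⁻¹ q.1, σ⁻¹ q.2) else (σ⁻¹ q.2, σ⁻¹ q.1))
  · rintro p hp
    simp only [Finset.mem_filter, Finset.mem_univ, true_and] at hp ⊢
    obtain ⟨h1, h2⟩ := hp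
    have hne : σ p.1 ≠ σ p.2 := fun h => absurd (σ.injective h) (ne_of_lt h1)
    by_cases h : σ p.1 < σ p.2
    · simp only [if_pos h]
      exact ⟨h, by rw [hπσ, hπσ]; exact h2.mp h⟩
    · simp only [if_neg h]
      have h' : σ p.2 < σ p.1 := lt_of_le_of_ne (not_lt.mp h) (Ne.symm hne)
      refine ⟨h', ?_⟩
      rw [hπσ, hπσ]
      have hτne : τ p.1 ≠ τ p.2 := fun hh => absurd (τ.injective hh) (ne_of_lt h1)
      rcases lt_or_gt_of_ne hτne with hh | hh
      · exact hh
      · exact absurd (h2.mpr hh) h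
  · rintro q hq
    simp only [Finset.mem_filter, Finset.mem_univ, true_and] at hq ⊢
    obtain ⟨h1, h2⟩ := hq
    rw [show π q.1 = τ (σ⁻¹ q.1) by simp [hπ], show π q.2 = τ (σ⁻¹ q.2) by simp [hπ]] at h2
    have hne : σ⁻¹ q.1 ≠ σ⁻¹ q.2 := fun h => absurd (σ⁻¹.injective h) (ne_of_lt h1)
    by_cases h : σ⁻¹ q.1 < σ⁻¹ q.2
    · simp only [if_pos h]
      refine ⟨h, ?_⟩
      constructor
      · intro _; exact h2
      · intro _; simpa using h1
    · simp only [if_neg h]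
      have h' : σ⁻¹ q.2 < σ⁻¹ q.1 := lt_of_le_of_ne (not_lt.mp h) (Ne.symm hne)
      refine ⟨h', ?_⟩
      simp only [Equiv.Perm.inv_def, Equiv.apply_symm_apply]
      constructor
      · intro hh; exact absurd hh (asymm h1)
      · intro hh; exact absurd hh (asymm h2)
  · rintro p hp
    simp only [Finset.mem_filter, Finset.mem_univ, true_and] at hp
    obtain ⟨h1, h2⟩ := hp
    by_cases h : σ p.1 < σ p.2
    · simp [if_pos h, h1]
    · have hne : σ p.1 ≠ σ p.2 := fun hh => absurd (σ.injective hh) (ne_of_lt h1)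
      have h' : σ p.2 < σ p.1 := lt_of_le_of_ne (not_lt.mp h) (Ne.symm hne)
      simp [if_neg h, not_lt.mpr (le_of_lt h1), h1]
  · rintro q hq
    simp only [Finset.mem_filter, Finset.mem_univ, true_and] at hq
    obtain ⟨h1, h2⟩ := hq
    by_cases h : σ⁻¹ q.1 < σ⁻¹ q.2
    · rw [if_pos h]; simp [h1]
    · have hne : σ⁻¹ q.1 ≠ σ⁻¹ q.2 := fun hh => absurd (σ⁻¹.injective hh) (ne_of_lt h1)
      have h' : σ⁻¹ q.2 < σ⁻¹ q.1 := lt_of_le_of_ne (not_lt.mp h) (Ne.symm hne)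
      rw [if_neg h]; simp [not_lt.mpr (le_of_lt h1), h1]

end DGaux

theorem kendall_le_footrule (n : ℕ) (σ τ : Equiv.Perm (Fin n)) :
    (kendallTau σ τ : ℤ) ≤ footrule σ τ := by
  rw [DGaux.kendall_red, DGaux.footrule_red σ τ]
  exact DGaux.inv_le_fr n _ (Finset.card_le_card (Finset.subset_univ _) |>.trans (by simp))
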